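/- Let g : ℝ^n → ℝ^n with g(0) = 0, and let V : ℝ^n → ℝ be differentiable with V(0) = 0 and V(x) > 0 for all x ≠ 0. Suppose there exist p, q > 0, α ∈ (0,1), β > 1 such that the directional derivative satisfies ⟨∇V(x), g(x)⟩ ≤ −p·V(x)^α − q·V(x)^β for all x ≠ 0. Then every differentiable curve x : ℝ → ℝ^n satisfying x′(t) = g(x(t)) for all t ≥ 0 satisfies x(t) = 0 for all t ≥ T, where T := 1/(p(1−α)) + 1/(q(β−1)). -/

import Mathlib

open scoped RealInnerProductSpace

/-- Mean value bound: if `f' ≤ C` on `[a,b]` then `f b - f a ≤ C * (b - a)`. -/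
lemma deriv_bound_aux (f f' : ℝ → ℝ) (C a b : ℝ) (hab : a ≤ b)
    (hf : ∀ s ∈ Set.Icc a b, HasDerivAt f (f' s) s)
    (hC : ∀ s ∈ Set.Icc a b, f' s ≤ C) :
    f b - f a ≤ C * (b - a) := by
  have key : ∀ s ∈ Set.Icc a b, HasDerivAt (fun s => C * s - f s) (C - f' s) s := by
    intro s hs
    have h := ((hasDerivAt_id' s).const_mul C).sub (hf s hs)
    rw [mul_one] at h
    exact h
  have hmono : MonotoneOn (fun s => C * s - f s) (Set.Icc a b) := by
    apply monotoneOn_of_deriv_nonneg (convex_Icc a b)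
    · exact fun s hs => (key s hs).continuousAt.continuousWithinAt
    · intro s hs
      rw [interior_Icc] at hs
      exact (key s (Set.mem_Icc_of_Ioo hs)).differentiableAt.differentiableWithinAt
    · intro s hs
      rw [interior_Icc] at hs
      rw [(key s (Set.mem_Icc_of_Ioo hs)).deriv]
      have := hC s (Set.mem_Icc_of_Ioo hs)
      linarith
  have := hmono (Set.left_mem_Icc.2 hab) (Set.right_mem_Icc.2 hab) hab
  simp only at this
  nlinarith

/-- Mean value bound: if `C ≤ f'` on `[a,b]` then `C * (b - a) ≤ f b - f a`. -/
lemma deriv_bound_aux' (f f' : ℝ → ℝ) (C a b : ℝ) (hab : a ≤ b)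
    (hf : ∀ s ∈ Set.Icc a b, HasDerivAt f (f' s) s)
    (hC : ∀ s ∈ Set.Icc a b, C ≤ f' s) :
    C * (b - a) ≤ f b - f a := by
  have := deriv_bound_aux (fun s => -f s) (fun s => -f' s) (-C) a b hab
    (fun s hs => (hf s hs).neg) (fun s hs => by simpa using neg_le_neg (hC s hs))
  nlinarith

/-- fixed-time stability of the origin for `ẋ = g(x)` via a
Lyapunov function `V` satisfying `⟨∇V(x), g(x)⟩ ≤ -p V(x)^α - q V(x)^β`. -/
theorem stmt_1 (n : ℕ)
    (g : EuclideanSpace ℝ (Fin n) → EuclideanSpace ℝ (Fin n)) (hg0 : g 0 = 0)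
    (V : EuclideanSpace ℝ (Fin n) → ℝ)
    (V' : EuclideanSpace ℝ (Fin n) → EuclideanSpace ℝ (Fin n))
    (hV : ∀ x, HasGradientAt V (V' x) x)
    (hV0 : V 0 = 0) (hVpos : ∀ x, x ≠ 0 → 0 < V x)
    (p q α β T : ℝ) (hp : 0 < p) (hq : 0 < q)
    (hα : α ∈ Set.Ioo (0 : ℝ) 1) (hβ : 1 < β)
    (hT : T = 1 / (p * (1 - α)) + 1 / (q * (β - 1)))
    (hineq : ∀ x, x ≠ 0 → ⟪V' x, g x⟫ ≤ -p * V x ^ α - q * V x ^ β) :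
    ∀ x : ℝ → EuclideanSpace ℝ (Fin n),
      (∀ t, 0 ≤ t → HasDerivAt x (g (x t)) t) →
      ∀ t, T ≤ t → x t = 0 := by
  obtain ⟨hα0, hα1⟩ := hα
  intro x hx
  set v : ℝ → ℝ := fun s => V (x s) with hv_def
  set v' : ℝ → ℝ := fun s => ⟪V' (x s), g (x s)⟫ with hv'_def
  have hderiv : ∀ s, 0 ≤ s → HasDerivAt v (v' s) s := by
    intro s hs
    have h1 := (hV (x s)).hasFDerivAt.comp_hasDerivAt s (hx s hs)
    simpa [v, v', Function.comp_def, InnerProductSpace.toDual_apply_apply] using h1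
  have hVnn : ∀ y, 0 ≤ V y := by
    intro y
    by_cases h : y = 0
    · simp [h, hV0]
    · exact (hVpos y h).le
  have h1a : (0:ℝ) < 1 - α := by linarith
  have hb1 : (0:ℝ) < β - 1 := by linarith
  have hT2pos : 0 < 1 / (p * (1 - α)) := by positivity
  have hT1pos : 0 < 1 / (q * (β - 1)) := by positivity
  set T1 : ℝ := 1 / (q * (β - 1)) with hT1_def
  have hT1T : T1 ≤ T := by rw [hT]; linarith
  have hTpos : 0 < T := by rw [hT]; linarith
  -- v is antitone on [0, ∞)
  have hv'le : ∀ s, 0 ≤ s → v' s ≤ 0 := by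
    intro s hs
    by_cases hxs : x s = 0
    · simp [v', hxs, hg0]
    · have h1 := hineq (x s) hxs
      have h2 := hVpos (x s) hxs
      have h3 := Real.rpow_pos_of_pos h2 α
      have h4 := Real.rpow_pos_of_pos h2 β
      have : v' s ≤ -p * V (x s) ^ α - q * V (x s) ^ β := h1
      nlinarith
  have hanti : AntitoneOn v (Set.Ici (0 : ℝ)) := by
    apply antitoneOn_of_deriv_nonpos (convex_Ici 0)
    · exact fun s hs => (hderiv s hs).continuousAt.continuousWithinAt
    · intro s hs
      rw [interior_Ici] at hs
      exact (hderiv s hs.le).differentiableAt.differentiableWithinAt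
    · intro s hs
      rw [interior_Ici] at hs
      rw [(hderiv s hs.le).deriv]
      exact hv'le s hs.le
  -- main claim: v T = 0
  have hvT : v T = 0 := by
    by_contra hne
    have hvTpos : 0 < v T := lt_of_le_of_ne (hVnn _) (Ne.symm hne)
    have hpos : ∀ s ∈ Set.Icc (0 : ℝ) T, 0 < v s := by
      intro s hs
      exact lt_of_lt_of_le hvTpos (hanti hs.1 (le_of_lt hTpos) hs.2)
    have hxne : ∀ s ∈ Set.Icc (0 : ℝ) T, x s ≠ 0 := by
      intro s hs h0
      have := hpos s hs
      rw [hv_def] at this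
      simp only [h0, hV0] at this
      exact lt_irrefl 0 this
    have hv'ineq : ∀ s ∈ Set.Icc (0 : ℝ) T,
        v' s ≤ -p * v s ^ α - q * v s ^ β :=
      fun s hs => hineq (x s) (hxne s hs)
    -- Phase 1 on [0, T1]: u := v ^ (1 - β) increases at rate ≥ q (β - 1)
    have hsub1 : Set.Icc (0 : ℝ) T1 ⊆ Set.Icc 0 T :=
      Set.Icc_subset_Icc le_rfl hT1T
    have hu : ∀ s ∈ Set.Icc (0 : ℝ) T1,
        HasDerivAt (fun s => v s ^ (1 - β))
          ((1 - β) * v s ^ (1 - β - 1) * v' s) s := by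
      intro s hs
      have hvs := hpos s (hsub1 hs)
      exact (Real.hasDerivAt_rpow_const (Or.inl hvs.ne')).comp s (hderiv s hs.1)
    have hu' : ∀ s ∈ Set.Icc (0 : ℝ) T1,
        q * (β - 1) ≤ (1 - β) * v s ^ (1 - β - 1) * v' s := by
      intro s hs
      have hvs := hpos s (hsub1 hs)
      have h1 := hv'ineq s (hsub1 hs)
      have h2 : v' s ≤ -q * v s ^ β := by
        have := Real.rpow_pos_of_pos hvs α
        nlinarith
      have h3 : (0:ℝ) < v s ^ (1 - β - 1) := Real.rpow_pos_of_pos hvs _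
      have h4 : v s ^ (1 - β - 1) * v s ^ β = 1 := by
        rw [← Real.rpow_add hvs]
        norm_num
      have h5 : (1 - β) * v s ^ (1 - β - 1) * v' s
          ≥ (1 - β) * v s ^ (1 - β - 1) * (-q * v s ^ β) := by
        have hneg : (1 - β) * v s ^ (1 - β - 1) ≤ 0 := by nlinarith
        exact mul_le_mul_of_nonpos_left h2 hneg
      have h6 : (1 - β) * v s ^ (1 - β - 1) * (-q * v s ^ β) = q * (β - 1) := by
        have : (1 - β) * v s ^ (1 - β - 1) * (-q * v s ^ β)
            = q * (β - 1) * (v s ^ (1 - β - 1) * v s ^ β) := by ring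
        rw [this, h4, mul_one]
      linarith [h5, h6.symm.le]
    have hstep1 := deriv_bound_aux' (fun s => v s ^ (1 - β))
      (fun s => (1 - β) * v s ^ (1 - β - 1) * v' s) (q * (β - 1)) 0 T1
      hT1pos.le hu hu'
    have hqb : q * (β - 1) * (T1 - 0) = 1 := by
      have hne' : q * (β - 1) ≠ 0 := by positivity
      rw [hT1_def, sub_zero, mul_one_div, div_self hne']
    have hu0 : 0 < v 0 ^ (1 - β) :=
      Real.rpow_pos_of_pos (hpos 0 ⟨le_rfl, hTpos.le⟩) _
    have huT1 : 1 < v T1 ^ (1 - β) := by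
      rw [hqb] at hstep1
      linarith
    have hvT1le1 : v T1 ≤ 1 := by
      by_contra h
      push_neg at h
      have : v T1 ^ (1 - β) ≤ 1 :=
        Real.rpow_le_one_of_one_le_of_nonpos h.le (by linarith)
      linarith
    -- Phase 2 on [T1, T]: w := v ^ (1 - α) decreases at rate ≥ p (1 - α)
    have hsub2 : Set.Icc T1 T ⊆ Set.Icc 0 T :=
      Set.Icc_subset_Icc hT1pos.le le_rfl
    have hw : ∀ s ∈ Set.Icc T1 T,
        HasDerivAt (fun s => v s ^ (1 - α))
          ((1 - α) * v s ^ (1 - α - 1) * v' s) s := by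
      intro s hs
      have hvs := hpos s (hsub2 hs)
      exact (Real.hasDerivAt_rpow_const (Or.inl hvs.ne')).comp s
        (hderiv s (le_trans hT1pos.le hs.1))
    have hw' : ∀ s ∈ Set.Icc T1 T,
        (1 - α) * v s ^ (1 - α - 1) * v' s ≤ -(p * (1 - α)) := by
      intro s hs
      have hvs := hpos s (hsub2 hs)
      have h1 := hv'ineq s (hsub2 hs)
      have h2 : v' s ≤ -p * v s ^ α := by
        have := Real.rpow_pos_of_pos hvs β
        nlinarith
      have h3 : (0:ℝ) < v s ^ (1 - α - 1) := Real.rpow_pos_of_pos hvs _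
      have h4 : v s ^ (1 - α - 1) * v s ^ α = 1 := by
        rw [← Real.rpow_add hvs]
        norm_num
      have hcoef : 0 < (1 - α) * v s ^ (1 - α - 1) := mul_pos h1a h3
      have h5 : (1 - α) * v s ^ (1 - α - 1) * v' s
          ≤ (1 - α) * v s ^ (1 - α - 1) * (-p * v s ^ α) :=
        mul_le_mul_of_nonneg_left h2 hcoef.le
      have h6 : (1 - α) * v s ^ (1 - α - 1) * (-p * v s ^ α) = -(p * (1 - α)) := by
        have : (1 - α) * v s ^ (1 - α - 1) * (-p * v s ^ α)
            = -(p * (1 - α)) * (v s ^ (1 - α - 1) * v s ^ α) := by ring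
        rw [this, h4, mul_one]
      linarith [h5, h6.le]
    have hstep2 := deriv_bound_aux (fun s => v s ^ (1 - α))
      (fun s => (1 - α) * v s ^ (1 - α - 1) * v' s) (-(p * (1 - α))) T1 T
      hT1T hw hw'
    have hpa : -(p * (1 - α)) * (T - T1) = -1 := by
      have hT2 : T - T1 = 1 / (p * (1 - α)) := by rw [hT, hT1_def]; ring
      have hne' : p * (1 - α) ≠ 0 := by positivity
      rw [hT2, mul_one_div, neg_div, div_self hne']
    have hwT1 : v T1 ^ (1 - α) ≤ 1 :=
      Real.rpow_le_one (hVnn _) hvT1le1 (by linarith)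
    have hwT : 0 < v T ^ (1 - α) := Real.rpow_pos_of_pos hvTpos _
    rw [hpa] at hstep2
    linarith
  -- conclude
  intro t ht
  have hvt : v t ≤ 0 := by
    have := hanti (Set.mem_Ici.2 hTpos.le) (Set.mem_Ici.2 (le_trans hTpos.le ht)) ht
    linarith [this, hvT.le]
  by_contra hxt
  have := hVpos (x t) hxt
  rw [hv_def] at hvt
  linarith
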